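/- Let f be a holomorphic self-map of the unit disk D without fixed points such that s^f(z_0) = 0 for some z_0 ∈ D. Then lim_{n→∞} ω(f^n(z), f^n(w)) = 0 for all z, w ∈ D. -/

import Mathlib

open Complex Metric Filter Set

/-- Inverse hyperbolic tangent. -/
noncomputable def artanh (t : ℝ) : ℝ := (1/2) * Real.log ((1 + t) / (1 - t))

/-- Poincaré distance on the unit disk. -/
noncomputable def pd (z w : ℂ) : ℝ :=
  artanh (‖(w - z) / (1 - (starRingEnd ℂ) z * w)‖)

/-- Holomorphic self-map of the unit disk. -/
def HolSelfDisk (f : ℂ → ℂ) : Prop :=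
  DifferentiableOn ℂ f (ball (0:ℂ) 1) ∧ MapsTo f (ball (0:ℂ) 1) (ball (0:ℂ) 1)

/-- A pair of maps that are mutually inverse holomorphic self-maps of the disk,
i.e. an automorphism of the disk together with its inverse. -/
def IsDiskAutPair (γ γinv : ℂ → ℂ) : Prop :=
  HolSelfDisk γ ∧ HolSelfDisk γinv ∧
  (∀ z ∈ ball (0:ℂ) 1, γinv (γ z) = z) ∧ (∀ z ∈ ball (0:ℂ) 1, γ (γinv z) = z)

namespace Stmt10Aux
open Topology

noncomputable def Complex.abs : AbsoluteValue ℂ ℝ :=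
  IsAbsoluteValue.toAbsoluteValue (norm : ℂ → ℝ)

@[simp] lemma Complex.norm_eq_abs (z : ℂ) : ‖z‖ = Complex.abs z := rfl

lemma Complex.abs_apply (z : ℂ) : Complex.abs z = Real.sqrt (Complex.normSq z) :=
  _root_.Complex.norm_def z

@[simp] lemma Complex.abs_conj (z : ℂ) : Complex.abs ((starRingEnd ℂ) z) = Complex.abs z :=
  _root_.Complex.norm_conj z

@[simp] lemma Complex.abs_ofReal (x : ℝ) : Complex.abs (x : ℂ) = |x| :=
  _root_.Complex.norm_real x

lemma Complex.sq_abs (z : ℂ) : Complex.abs z ^ 2 = Complex.normSq z :=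
  _root_.Complex.sq_norm z

lemma Complex.abs_re_le_abs (z : ℂ) : |z.re| ≤ Complex.abs z :=
  _root_.Complex.abs_re_le_norm z

lemma Complex.continuous_abs : Continuous Complex.abs := continuous_norm

noncomputable def mob (a z : ℂ) : ℂ := (z - a) / (1 - (starRingEnd ℂ) a * z)

lemma mem_ball_iff {z : ℂ} : z ∈ ball (0:ℂ) 1 ↔ Complex.abs z < 1 := by
  simp [mem_ball_zero_iff]

lemma mob_den_ne {a z : ℂ} (ha : Complex.abs a < 1) (hz : Complex.abs z < 1) :
    (1 : ℂ) - (starRingEnd ℂ) a * z ≠ 0 := by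
  intro h
  have h1 : (1:ℂ) = (starRingEnd ℂ) a * z := by linear_combination h
  have : (1:ℝ) = Complex.abs ((starRingEnd ℂ) a * z) := by rw [← h1]; simp
  rw [map_mul, Complex.abs_conj] at this
  nlinarith [Complex.abs.nonneg a, Complex.abs.nonneg z]

lemma normSq_key (a z : ℂ) :
    Complex.normSq (1 - (starRingEnd ℂ) a * z) - Complex.normSq (z - a)
      = (1 - Complex.normSq a) * (1 - Complex.normSq z) := by
  have h : ∀ w : ℂ, (Complex.normSq w : ℂ) = (starRingEnd ℂ) w * w := by
    intro w; rw [Complex.normSq_eq_conj_mul_self]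
  have := congrArg (fun x : ℝ => (x : ℂ))
    (rfl : Complex.normSq (1 - (starRingEnd ℂ) a * z) - Complex.normSq (z - a)
      = Complex.normSq (1 - (starRingEnd ℂ) a * z) - Complex.normSq (z - a))
  apply Complex.ofReal_injective
  push_cast
  rw [h, h, h, h]
  simp only [map_sub, map_mul, map_one, Complex.conj_conj]
  ring

lemma abs_mob_lt_one {a z : ℂ} (ha : Complex.abs a < 1) (hz : Complex.abs z < 1) :
    Complex.abs (mob a z) < 1 := by
  have hkey := normSq_key a z
  have h1 : Complex.normSq a < 1 := by
    have := Complex.sq_abs a; nlinarith [Complex.abs.nonneg a]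
  have h2 : Complex.normSq z < 1 := by
    have := Complex.sq_abs z; nlinarith [Complex.abs.nonneg z]
  have h3 : Complex.normSq (z - a) < Complex.normSq (1 - (starRingEnd ℂ) a * z) := by
    nlinarith [Complex.normSq_nonneg (z - a)]
  have h4 : Complex.abs (z - a) < Complex.abs (1 - (starRingEnd ℂ) a * z) := by
    rw [Complex.abs_apply, Complex.abs_apply]
    exact Real.sqrt_lt_sqrt (Complex.normSq_nonneg _) h3
  have h5 : 0 < Complex.abs (1 - (starRingEnd ℂ) a * z) :=
    lt_of_le_of_lt (Complex.abs.nonneg _) h4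
  rw [mob, map_div₀, div_lt_one h5]
  exact h4

lemma mob_self (a : ℂ) : mob a a = 0 := by simp [mob]

lemma mob_neg_mob {a z : ℂ} (ha : Complex.abs a < 1) (hz : Complex.abs z < 1) :
    mob (-a) (mob a z) = z := by
  have d1 : (1 : ℂ) - (starRingEnd ℂ) a * z ≠ 0 := mob_den_ne ha hz
  have d2 : (1 : ℂ) - a * (starRingEnd ℂ) a ≠ 0 := by
    have := mob_den_ne ha ha; rwa [mul_comm] at this
  simp only [mob, map_neg]
  have e1 : (z - a) / (1 - (starRingEnd ℂ) a * z) - -a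
      = z * (1 - a * (starRingEnd ℂ) a) / (1 - (starRingEnd ℂ) a * z) := by
    rw [eq_div_iff d1, sub_mul, div_mul_cancel₀ _ d1]; ring
  have e2 : 1 - -(starRingEnd ℂ) a * ((z - a) / (1 - (starRingEnd ℂ) a * z))
      = (1 - a * (starRingEnd ℂ) a) / (1 - (starRingEnd ℂ) a * z) := by
    rw [eq_div_iff d1, sub_mul, mul_assoc, div_mul_cancel₀ _ d1]; ring
  rw [e1, e2, div_div_div_cancel_right₀ d1, mul_div_assoc, div_self d2, mul_one]

lemma abs_mob_symm (a z : ℂ) : Complex.abs (mob a z) = Complex.abs (mob z a) := by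
  rw [mob, mob, map_div₀, map_div₀]
  congr 1
  · exact Complex.abs.map_sub z a
  · rw [← Complex.abs_conj (1 - (starRingEnd ℂ) z * a)]
    congr 1
    simp only [map_sub, map_mul, map_one, Complex.conj_conj]
    ring


lemma mob_diffOn {a : ℂ} (ha : Complex.abs a < 1) :
    DifferentiableOn ℂ (mob a) (ball (0:ℂ) 1) := by
  apply DifferentiableOn.div
  · exact (differentiableOn_id.sub (differentiableOn_const a))
  · exact (differentiableOn_const 1).sub ((differentiableOn_const _).mul differentiableOn_id)
  · intro z hz
    exact mob_den_ne ha (mem_ball_iff.mp hz)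

lemma mob_mapsTo {a : ℂ} (ha : Complex.abs a < 1) :
    MapsTo (mob a) (ball (0:ℂ) 1) (ball (0:ℂ) 1) := by
  intro z hz
  exact mem_ball_iff.mpr (abs_mob_lt_one ha (mem_ball_iff.mp hz))

lemma mob_neg_zero (a : ℂ) : mob (-a) 0 = a := by simp [mob]

/-- Schwarz lemma. -/
lemma schwarz {h : ℂ → ℂ} (hd : DifferentiableOn ℂ h (ball (0:ℂ) 1))
    (hm : MapsTo h (ball (0:ℂ) 1) (ball (0:ℂ) 1)) (h0 : h 0 = 0)
    {z : ℂ} (hz : z ∈ ball (0:ℂ) 1) : Complex.abs (h z) ≤ Complex.abs z := by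
  have hm' : MapsTo h (ball (0:ℂ) 1) (ball (h 0) 1) := by rwa [h0]
  have hb := Complex.norm_dslope_le_div_of_mapsTo_ball hd (hm'.mono_right ball_subset_closedBall) hz
  rcases eq_or_ne z 0 with rfl | hz0
  · simp [h0]
  · rw [dslope_of_ne _ hz0, slope_def_field, h0, sub_zero, sub_zero] at hb
    rw [Complex.norm_eq_abs, map_div₀, div_le_iff₀ (by
      simpa using Complex.abs.pos hz0)] at hb
    simpa using hb

/-- Schwarz–Pick. -/
lemma schwarz_pick {g : ℂ → ℂ} (hd : DifferentiableOn ℂ g (ball (0:ℂ) 1))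
    (hm : MapsTo g (ball (0:ℂ) 1) (ball (0:ℂ) 1)) {x y : ℂ}
    (hx : x ∈ ball (0:ℂ) 1) (hy : y ∈ ball (0:ℂ) 1) :
    Complex.abs (mob (g x) (g y)) ≤ Complex.abs (mob x y) := by
  have hax : Complex.abs x < 1 := mem_ball_iff.mp hx
  have hay : Complex.abs y < 1 := mem_ball_iff.mp hy
  have hgx : Complex.abs (g x) < 1 := mem_ball_iff.mp (hm hx)
  have hnegx : Complex.abs (-x) < 1 := by rwa [Complex.abs.map_neg]
  set G : ℂ → ℂ := (mob (g x)) ∘ g ∘ (mob (-x)) with hG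
  have hGd : DifferentiableOn ℂ G (ball (0:ℂ) 1) :=
    ((mob_diffOn hgx).comp (hd.comp (mob_diffOn hnegx) (mob_mapsTo hnegx))
      (hm.comp (mob_mapsTo hnegx)))
  have hGm : MapsTo G (ball (0:ℂ) 1) (ball (0:ℂ) 1) :=
    (mob_mapsTo hgx).comp (hm.comp (mob_mapsTo hnegx))
  have hG0 : G 0 = 0 := by
    simp only [hG, Function.comp_apply, mob_neg_zero, mob_self]
  have hxy : mob x y ∈ ball (0:ℂ) 1 := mem_ball_iff.mpr (abs_mob_lt_one hax hay)
  have := schwarz hGd hGm hG0 hxy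
  have hGxy : G (mob x y) = mob (g x) (g y) := by
    have : mob (-x) (mob x y) = y := by
      have := mob_neg_mob hax hay; simpa using this
    simp only [hG, Function.comp_apply, this]
  rwa [hGxy] at this

lemma abs_dslope_le_one {h : ℂ → ℂ} (hd : DifferentiableOn ℂ h (ball (0:ℂ) 1))
    (hm : MapsTo h (ball (0:ℂ) 1) (ball (0:ℂ) 1)) (h0 : h 0 = 0)
    {z : ℂ} (hz : z ∈ ball (0:ℂ) 1) : Complex.abs (dslope h 0 z) ≤ 1 := by
  have hm' : MapsTo h (ball (0:ℂ) 1) (ball (h 0) 1) := by rwa [h0]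
  have := Complex.norm_dslope_le_div_of_mapsTo_ball hd (hm'.mono_right ball_subset_closedBall) hz
  simpa using this

lemma dslope_diffOn {h : ℂ → ℂ} (hd : DifferentiableOn ℂ h (ball (0:ℂ) 1)) :
    DifferentiableOn ℂ (dslope h 0) (ball (0:ℂ) 1) :=
  (Complex.differentiableOn_dslope (ball_mem_nhds 0 one_pos)).mpr hd

/-- Two-point Schwarz–Pick-type estimate for the Schwarz quotient. -/
lemma dslope_sp {h : ℂ → ℂ} (hd : DifferentiableOn ℂ h (ball (0:ℂ) 1))
    (hm : MapsTo h (ball (0:ℂ) 1) (ball (0:ℂ) 1)) (h0 : h 0 = 0)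
    {x y : ℂ} (hx : x ∈ ball (0:ℂ) 1) (hy : y ∈ ball (0:ℂ) 1) :
    Complex.abs (dslope h 0 y - dslope h 0 x) ≤
      Complex.abs (mob x y) *
        Complex.abs (1 - (starRingEnd ℂ) (dslope h 0 x) * dslope h 0 y) := by
  set φ : ℂ → ℂ := dslope h 0 with hφ
  have hφd : DifferentiableOn ℂ φ (ball (0:ℂ) 1) := dslope_diffOn hd
  have hφb : ∀ z ∈ ball (0:ℂ) 1, Complex.abs (φ z) ≤ 1 := fun z hz =>
    abs_dslope_le_one hd hm h0 hz
  -- the one-parameter family of strict self-maps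
  set c : ℕ → ℝ := fun n => 1 - 1 / (n + 1) with hc
  have hc0 : ∀ n, 0 ≤ c n := by
    intro n
    have h1 : 1 / ((n : ℝ) + 1) ≤ 1 := by
      rw [div_le_one (by positivity)]; linarith [Nat.cast_nonneg (α := ℝ) n]
    simp only [hc]; linarith
  have hc1 : ∀ n, c n < 1 := by
    intro n
    have h1 : 0 < 1 / ((n : ℝ) + 1) := by positivity
    simp only [hc]; linarith
  have key : ∀ n : ℕ, c n * Complex.abs (φ y - φ x) ≤
      Complex.abs (mob x y) *
        Complex.abs (1 - ((c n : ℂ))^2 * ((starRingEnd ℂ) (φ x) * φ y)) := by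
    intro n
    set ψ : ℂ → ℂ := fun ζ => (c n : ℂ) * φ ζ with hψ
    have hψd : DifferentiableOn ℂ ψ (ball (0:ℂ) 1) := hφd.const_mul _
    have hψb : ∀ z ∈ ball (0:ℂ) 1, Complex.abs (ψ z) < 1 := by
      intro z hz
      have : Complex.abs (ψ z) = c n * Complex.abs (φ z) := by
        simp only [hψ, map_mul, Complex.abs_ofReal, _root_.abs_of_nonneg (hc0 n)]
      rw [this]
      calc c n * Complex.abs (φ z) ≤ c n * 1 := by
            have := hφb z hz
            nlinarith [hc0 n]
      _ < 1 := by simpa using hc1 n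
    have hψm : MapsTo ψ (ball (0:ℂ) 1) (ball (0:ℂ) 1) := fun z hz =>
      mem_ball_iff.mpr (hψb z hz)
    have hsp := schwarz_pick hψd hψm hx hy
    have hψx : Complex.abs (ψ x) < 1 := hψb x hx
    have hψy : Complex.abs (ψ y) < 1 := hψb y hy
    have hden : (1 : ℂ) - (starRingEnd ℂ) (ψ x) * ψ y ≠ 0 := mob_den_ne hψx hψy
    have hdpos : 0 < Complex.abs (1 - (starRingEnd ℂ) (ψ x) * ψ y) :=
      Complex.abs.pos hden
    rw [mob, map_div₀, div_le_iff₀ hdpos] at hsp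
    have e1 : ψ y - ψ x = (c n : ℂ) * (φ y - φ x) := by simp only [hψ]; ring
    have e2 : (1 : ℂ) - (starRingEnd ℂ) (ψ x) * ψ y
        = 1 - ((c n : ℂ))^2 * ((starRingEnd ℂ) (φ x) * φ y) := by
      simp only [hψ, map_mul, Complex.conj_ofReal]; ring
    rw [e1, e2] at hsp
    rw [map_mul, Complex.abs_ofReal, _root_.abs_of_nonneg (hc0 n)] at hsp
    exact hsp
  -- pass to the limit
  have hclim : Tendsto c atTop (𝓝 1) := by
    simp only [hc]
    have := tendsto_one_div_add_atTop_nhds_zero_nat (𝕜 := ℝ)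
    simpa using tendsto_const_nhds.sub this
  have hL : Tendsto (fun n => c n * Complex.abs (φ y - φ x)) atTop
      (𝓝 (Complex.abs (φ y - φ x))) := by
    have h := hclim.mul_const (Complex.abs (φ y - φ x))
    rwa [one_mul] at h
  have hR : Tendsto (fun n => Complex.abs (mob x y) *
      Complex.abs (1 - ((c n : ℂ))^2 * ((starRingEnd ℂ) (φ x) * φ y))) atTop
      (𝓝 (Complex.abs (mob x y) *
        Complex.abs (1 - ((1 : ℂ))^2 * ((starRingEnd ℂ) (φ x) * φ y)))) := by
    apply Tendsto.const_mul
    have h1 : Tendsto (fun n => ((c n : ℂ))) atTop (𝓝 (1 : ℂ)) := by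
      have := (Complex.continuous_ofReal.tendsto 1).comp hclim
      simpa [Function.comp_def] using this
    have h2 : Tendsto (fun n => (1 : ℂ) - ((c n : ℂ))^2 *
        ((starRingEnd ℂ) (φ x) * φ y)) atTop
        (𝓝 ((1 : ℂ) - ((1:ℂ))^2 * ((starRingEnd ℂ) (φ x) * φ y))) := by
      exact tendsto_const_nhds.sub (((h1.pow 2)).mul_const _)
    exact (Complex.continuous_abs.tendsto _).comp h2
  have := le_of_tendsto_of_tendsto' hL hR key
  simpa using this

lemma artanh_nonneg {t : ℝ} (h0 : 0 ≤ t) (h1 : t < 1) : 0 ≤ artanh t := by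
  have : (1 : ℝ) ≤ (1 + t) / (1 - t) := by
    rw [le_div_iff₀ (by linarith)]; linarith
  have := Real.log_nonneg this
  rw [artanh]; linarith

lemma artanh_mono {s t : ℝ} (h0 : 0 ≤ s) (hst : s ≤ t) (h1 : t < 1) :
    artanh s ≤ artanh t := by
  have hs1 : s < 1 := lt_of_le_of_lt hst h1
  have h2 : (1 + s) / (1 - s) ≤ (1 + t) / (1 - t) := by
    rw [div_le_div_iff₀ (by linarith) (by linarith)]
    nlinarith
  have h3 : (0:ℝ) < (1 + s) / (1 - s) := div_pos (by linarith) (by linarith)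
  have := Real.log_le_log h3 h2
  rw [artanh, artanh]; linarith

lemma artanh_pos {t : ℝ} (h0 : 0 < t) (h1 : t < 1) : 0 < artanh t := by
  have : (1 : ℝ) < (1 + t) / (1 - t) := by
    rw [lt_div_iff₀ (by linarith)]; linarith
  have := Real.log_pos this
  rw [artanh]; linarith

lemma artanh_add {s t : ℝ} (hs0 : 0 ≤ s) (hs1 : s < 1) (ht0 : 0 ≤ t) (ht1 : t < 1) :
    artanh ((s + t) / (1 + s * t)) = artanh s + artanh t := by
  have hst : (0:ℝ) < 1 + s * t := by nlinarith
  have hY : (0:ℝ) < 1 - (s + t) / (1 + s * t) := by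
    rw [sub_pos, div_lt_one hst]; nlinarith
  have hs' : (1:ℝ) - s ≠ 0 := by linarith
  have ht' : (1:ℝ) - t ≠ 0 := by linarith
  have hst' : (1:ℝ) + s * t ≠ 0 := ne_of_gt hst
  have hY' : (1:ℝ) - (s + t) / (1 + s * t) ≠ 0 := ne_of_gt hY
  have e : (1 + (s + t) / (1 + s * t)) / (1 - (s + t) / (1 + s * t))
      = ((1 + s) / (1 - s)) * ((1 + t) / (1 - t)) := by
    have hZpos : (0:ℝ) < 1 - s + (s * t - t) := by nlinarith
    have hZ : (1:ℝ) - s + (s * t - t) ≠ 0 := ne_of_gt hZpos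
    field_simp
    linear_combination (1 + s) * (1 + t) * mul_inv_cancel₀ hZ
  rw [artanh, artanh, artanh, e,
    Real.log_mul (ne_of_gt (div_pos (by linarith) (by linarith)))
      (ne_of_gt (div_pos (by linarith) (by linarith)))]
  ring

lemma artanh_tendsto_zero {r : ℕ → ℝ} (h0 : ∀ n, 0 ≤ r n) (h1 : ∀ n, r n < 1)
    (hr : Tendsto r atTop (𝓝 0)) :
    Tendsto (fun n => artanh (r n)) atTop (𝓝 0) := by
  have h2 : Tendsto (fun n => (1 + r n) / (1 - r n)) atTop (𝓝 1) := by
    have hnum : Tendsto (fun n => 1 + r n) atTop (𝓝 1) := by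
      simpa using tendsto_const_nhds.add hr
    have hden : Tendsto (fun n => 1 - r n) atTop (𝓝 1) := by
      simpa using tendsto_const_nhds.sub hr
    have := hnum.div hden one_ne_zero
    rw [div_one] at this; exact this
  have h3 : Tendsto (fun n => Real.log ((1 + r n) / (1 - r n))) atTop (𝓝 0) := by
    have := (Real.continuousAt_log one_ne_zero).tendsto.comp h2
    simpa [Function.comp_def] using this
  have h4 := h3.const_mul (1/2 : ℝ)
  simp only [artanh]
  simpa using h4

lemma tendsto_of_artanh_tendsto {s : ℕ → ℝ} (h0 : ∀ n, 0 ≤ s n) (h1 : ∀ n, s n < 1)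
    (hs : Tendsto (fun n => artanh (s n)) atTop (𝓝 0)) :
    Tendsto s atTop (𝓝 0) := by
  rw [Metric.tendsto_atTop]
  intro ε hε
  set ε' := min ε (1/2) with hε'
  have hε'0 : 0 < ε' := lt_min hε (by norm_num)
  have hε'1 : ε' < 1 := lt_of_le_of_lt (min_le_right _ _) (by norm_num)
  have hδ : 0 < artanh ε' := artanh_pos hε'0 hε'1
  rw [Metric.tendsto_atTop] at hs
  obtain ⟨N, hN⟩ := hs (artanh ε') hδ
  refine ⟨N, fun n hn => ?_⟩
  have h2 := hN n hn
  rw [Real.dist_eq, sub_zero] at h2 ⊢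
  rw [_root_.abs_of_nonneg (h0 n)]
  rw [_root_.abs_of_nonneg (artanh_nonneg (h0 n) (h1 n))] at h2
  by_contra hcon
  push_neg at hcon
  have : ε' ≤ s n := le_trans (min_le_left _ _) hcon
  have := artanh_mono (le_of_lt hε'0) this (h1 n)
  linarith

lemma pd_eq_mob (z w : ℂ) : pd z w = artanh (Complex.abs (mob z w)) := rfl

lemma pd_symm (z w : ℂ) : pd z w = pd w z := by
  rw [pd_eq_mob, pd_eq_mob, abs_mob_symm]

lemma pd_nonneg {z w : ℂ} (hz : z ∈ ball (0:ℂ) 1) (hw : w ∈ ball (0:ℂ) 1) :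
    0 ≤ pd z w :=
  artanh_nonneg (Complex.abs.nonneg _)
    (abs_mob_lt_one (mem_ball_iff.mp hz) (mem_ball_iff.mp hw))

lemma abs_mob_le_add {u v : ℂ} (hu : Complex.abs u < 1) (hv : Complex.abs v < 1) :
    Complex.abs (mob u v) ≤
      (Complex.abs u + Complex.abs v) / (1 + Complex.abs u * Complex.abs v) := by
  set S := Complex.abs u with hS
  set T := Complex.abs v with hT
  have hS0 : 0 ≤ S := Complex.abs.nonneg u
  have hT0 : 0 ≤ T := Complex.abs.nonneg v
  have hd : (1:ℂ) - (starRingEnd ℂ) u * v ≠ 0 := mob_den_ne hu hv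
  have hdpos : 0 < Complex.abs (1 - (starRingEnd ℂ) u * v) := Complex.abs.pos hd
  rw [mob, map_div₀, div_le_div_iff₀ hdpos (by nlinarith)]
  -- square both sides
  set ρ : ℝ := ((starRingEnd ℂ) u * v).re with hρ
  have hρ1 : |ρ| ≤ S * T := by
    have h1 := Complex.abs_re_le_abs ((starRingEnd ℂ) u * v)
    rw [map_mul, Complex.abs_conj] at h1
    exact h1
  have hsq1 : (Complex.abs (v - u))^2 = T^2 + S^2 - 2 * ρ := by
    rw [Complex.sq_abs, Complex.normSq_sub, ← Complex.sq_abs, ← Complex.sq_abs]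
    have : (v * (starRingEnd ℂ) u).re = ρ := by rw [hρ, mul_comm]
    rw [this]
  have hsq2 : (Complex.abs (1 - (starRingEnd ℂ) u * v))^2 = 1 + S^2 * T^2 - 2 * ρ := by
    rw [Complex.sq_abs, Complex.normSq_sub]
    have h1 : ((1:ℂ) * (starRingEnd ℂ) ((starRingEnd ℂ) u * v)).re = ρ := by
      rw [one_mul, hρ, Complex.conj_re]
    rw [h1, Complex.normSq_one, ← Complex.sq_abs, map_mul, Complex.abs_conj]
    ring
  have hS1 : S < 1 := hu
  have hT1 : T < 1 := hv
  have key : (Complex.abs (v - u) * (1 + S * T))^2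
      ≤ ((S + T) * Complex.abs (1 - (starRingEnd ℂ) u * v))^2 := by
    have iden : ((S+T))^2 * (1 + S^2*T^2 - 2*ρ) - (T^2 + S^2 - 2*ρ) * (1 + S*T)^2
        = 2 * (1 - S^2) * (1 - T^2) * (S*T + ρ) := by ring
    have hfac : 0 ≤ 2 * (1 - S^2) * (1 - T^2) * (S*T + ρ) := by
      have h1 : 0 ≤ 1 - S^2 := by nlinarith
      have h2 : 0 ≤ 1 - T^2 := by nlinarith
      have h3 : 0 ≤ S*T + ρ := by
        have := abs_le.mp hρ1
        linarith [this.1]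
      positivity
    calc (Complex.abs (v - u) * (1 + S * T))^2
        = (Complex.abs (v - u))^2 * (1 + S*T)^2 := by ring
      _ = (T^2 + S^2 - 2*ρ) * (1 + S*T)^2 := by rw [hsq1]
      _ ≤ (S+T)^2 * (1 + S^2*T^2 - 2*ρ) := by linarith
      _ = (S+T)^2 * (Complex.abs (1 - (starRingEnd ℂ) u * v))^2 := by rw [hsq2]
      _ = ((S + T) * Complex.abs (1 - (starRingEnd ℂ) u * v))^2 := by ring
  have h5 : 0 ≤ Complex.abs (v - u) * (1 + S * T) := by positivity
  have h6 : 0 ≤ (S + T) * Complex.abs (1 - (starRingEnd ℂ) u * v) := by positivity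
  exact (pow_le_pow_iff_left₀ h5 h6 (by norm_num)).mp key

lemma abs_mob_invariant {a x y : ℂ} (ha : Complex.abs a < 1) (hx : Complex.abs x < 1)
    (hy : Complex.abs y < 1) :
    Complex.abs (mob (mob a x) (mob a y)) = Complex.abs (mob x y) := by
  have hxb : x ∈ ball (0:ℂ) 1 := mem_ball_iff.mpr hx
  have hyb : y ∈ ball (0:ℂ) 1 := mem_ball_iff.mpr hy
  have hmx : Complex.abs (mob a x) < 1 := abs_mob_lt_one ha hx
  have hmy : Complex.abs (mob a y) < 1 := abs_mob_lt_one ha hy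
  have hna : Complex.abs (-a) < 1 := by rwa [Complex.abs.map_neg]
  apply le_antisymm
  · exact schwarz_pick (mob_diffOn ha) (mob_mapsTo ha) hxb hyb
  · have := schwarz_pick (mob_diffOn hna) (mob_mapsTo hna)
      (mem_ball_iff.mpr hmx) (mem_ball_iff.mpr hmy)
    rwa [mob_neg_mob ha hx, mob_neg_mob ha hy] at this

lemma pd_triangle {x y c : ℂ} (hx : x ∈ ball (0:ℂ) 1) (hy : y ∈ ball (0:ℂ) 1)
    (hc : c ∈ ball (0:ℂ) 1) : pd x y ≤ pd x c + pd c y := by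
  have hax : Complex.abs x < 1 := mem_ball_iff.mp hx
  have hay : Complex.abs y < 1 := mem_ball_iff.mp hy
  have hac : Complex.abs c < 1 := mem_ball_iff.mp hc
  set u := mob c x with hu
  set v := mob c y with hv
  have hua : Complex.abs u < 1 := abs_mob_lt_one hac hax
  have hva : Complex.abs v < 1 := abs_mob_lt_one hac hay
  set S := Complex.abs u with hS
  set T := Complex.abs v with hT
  have hS0 : 0 ≤ S := Complex.abs.nonneg u
  have hT0 : 0 ≤ T := Complex.abs.nonneg v
  have hinv : Complex.abs (mob x y) = Complex.abs (mob u v) :=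
    (abs_mob_invariant hac hax hay).symm
  have hle : Complex.abs (mob u v) ≤ (S + T) / (1 + S * T) := abs_mob_le_add hua hva
  have hlt1 : (S + T) / (1 + S * T) < 1 := by
    rw [div_lt_one (by nlinarith)]; nlinarith
  have h1 : pd x y ≤ artanh ((S + T) / (1 + S * T)) := by
    rw [pd_eq_mob, hinv]
    exact artanh_mono (Complex.abs.nonneg _) hle hlt1
  rw [artanh_add hS0 hua hT0 hva] at h1
  have e1 : pd x c = artanh S := by rw [pd_symm, pd_eq_mob]
  have e2 : pd c y = artanh T := by rw [pd_eq_mob]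
  rw [e1, e2]
  linarith

/-! ### Normalized frames -/

noncomputable def Tmap (p lam : ℂ) : ℂ → ℂ := fun ζ => lam * mob p ζ

noncomputable def Tinv (p lam : ℂ) : ℂ → ℂ :=
  fun u => mob (-p) ((starRingEnd ℂ) lam * u)

lemma abs_Tmap {p lam : ℂ} (hlam : Complex.abs lam = 1) (ζ : ℂ) :
    Complex.abs (Tmap p lam ζ) = Complex.abs (mob p ζ) := by
  rw [Tmap, map_mul, hlam, one_mul]

lemma Tmap_mapsTo {p lam : ℂ} (hp : Complex.abs p < 1) (hlam : Complex.abs lam = 1) :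
    MapsTo (Tmap p lam) (ball (0:ℂ) 1) (ball (0:ℂ) 1) := by
  intro ζ hζ
  rw [mem_ball_iff, abs_Tmap hlam]
  exact abs_mob_lt_one hp (mem_ball_iff.mp hζ)

lemma Tmap_diffOn {p lam : ℂ} (hp : Complex.abs p < 1) :
    DifferentiableOn ℂ (Tmap p lam) (ball (0:ℂ) 1) :=
  (mob_diffOn hp).const_mul _

lemma Tinv_mapsTo {p lam : ℂ} (hp : Complex.abs p < 1) (hlam : Complex.abs lam = 1) :
    MapsTo (Tinv p lam) (ball (0:ℂ) 1) (ball (0:ℂ) 1) := by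
  intro u hu
  rw [mem_ball_iff, Tinv]
  have hnp : Complex.abs (-p) < 1 := by rwa [Complex.abs.map_neg]
  apply abs_mob_lt_one hnp
  rw [map_mul, Complex.abs_conj, hlam, one_mul]
  exact mem_ball_iff.mp hu

lemma Tinv_diffOn {p lam : ℂ} (hp : Complex.abs p < 1) (hlam : Complex.abs lam = 1) :
    DifferentiableOn ℂ (Tinv p lam) (ball (0:ℂ) 1) := by
  have hnp : Complex.abs (-p) < 1 := by rwa [Complex.abs.map_neg]
  apply (mob_diffOn hnp).comp ((differentiableOn_const _).mul differentiableOn_id)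
  intro u hu
  simp only [Pi.mul_apply, id]
  rw [mem_ball_iff, map_mul, Complex.abs_conj, hlam, one_mul]
  exact mem_ball_iff.mp hu

lemma Tinv_Tmap {p lam : ℂ} (hp : Complex.abs p < 1) (hlam : Complex.abs lam = 1)
    {ζ : ℂ} (hζ : ζ ∈ ball (0:ℂ) 1) : Tinv p lam (Tmap p lam ζ) = ζ := by
  rw [Tmap, Tinv, ← mul_assoc]
  have h1 : (starRingEnd ℂ) lam * lam = 1 := by
    rw [← Complex.normSq_eq_conj_mul_self]
    rw [← Complex.sq_abs, hlam]
    norm_num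
  rw [h1, one_mul]
  exact mob_neg_mob hp (mem_ball_iff.mp hζ)

lemma Tinv_zero (p lam : ℂ) : Tinv p lam 0 = p := by
  rw [Tinv, mul_zero, mob_neg_zero]

lemma iter_diffOn {f : ℂ → ℂ} (hfd : DifferentiableOn ℂ f (ball (0:ℂ) 1))
    (hfm : MapsTo f (ball (0:ℂ) 1) (ball (0:ℂ) 1)) :
    ∀ k, DifferentiableOn ℂ (f^[k]) (ball (0:ℂ) 1) := by
  intro k
  induction k with
  | zero => simpa using differentiableOn_id
  | succ k ih =>
    rw [Function.iterate_succ']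
    exact hfd.comp ih (hfm.iterate k)

lemma one_sub_abs_le (x : ℂ) : 1 - Complex.abs x ≤ Complex.abs (1 - x) := by
  have := Complex.abs.add_le (1 - x) x
  simp only [sub_add_cancel, map_one] at this
  linarith

/-! ### The key synchronization lemma -/

set_option maxHeartbeats 2000000 in
lemma key_sync {f : ℂ → ℂ} (hf : HolSelfDisk f)
    (hfix : ∀ z ∈ ball (0:ℂ) 1, f z ≠ z)
    {z₀ : ℂ} (hz₀ : z₀ ∈ ball (0:ℂ) 1)
    (hstep : Tendsto (fun n => pd (f^[n] z₀) (f^[n+1] z₀)) atTop (𝓝 0))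
    {w : ℂ} (hw : w ∈ ball (0:ℂ) 1) :
    Tendsto (fun n => pd (f^[n] z₀) (f^[n] w)) atTop (𝓝 0) := by
  obtain ⟨hfd, hfm⟩ := hf
  set Z : ℕ → ℂ := fun n => f^[n] z₀ with hZdef
  set W : ℕ → ℂ := fun n => f^[n] w with hWdef
  have hZ : ∀ n, Z n ∈ ball (0:ℂ) 1 := fun n => hfm.iterate n hz₀
  have hW : ∀ n, W n ∈ ball (0:ℂ) 1 := fun n => hfm.iterate n hw
  have hZa : ∀ n, Complex.abs (Z n) < 1 := fun n => mem_ball_iff.mp (hZ n)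
  have hWa : ∀ n, Complex.abs (W n) < 1 := fun n => mem_ball_iff.mp (hW n)
  have hZsucc : ∀ n, Z (n + 1) = f (Z n) := fun n => Function.iterate_succ_apply' f n z₀
  have hWsucc : ∀ n, W (n + 1) = f (W n) := fun n => Function.iterate_succ_apply' f n w
  -- the step sequence
  set s : ℕ → ℝ := fun n => Complex.abs (mob (Z n) (Z (n + 1))) with hsdef
  have hs_lt : ∀ n, s n < 1 := fun n => abs_mob_lt_one (hZa n) (hZa (n + 1))
  have hs_nonneg : ∀ n, 0 ≤ s n := fun n => Complex.abs.nonneg _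
  have hs_pos : ∀ n, 0 < s n := by
    intro n
    apply Complex.abs.pos
    rw [mob]
    apply div_ne_zero
    · rw [sub_ne_zero, hZsucc n]
      exact hfix (Z n) (hZ n)
    · exact mob_den_ne (hZa n) (hZa (n + 1))
  have hs0 : Tendsto s atTop (𝓝 0) :=
    tendsto_of_artanh_tendsto hs_nonneg hs_lt hstep
  -- the distance sequence
  set r : ℕ → ℝ := fun n => Complex.abs (mob (Z n) (W n)) with hrdef
  have hr_lt : ∀ n, r n < 1 := fun n => abs_mob_lt_one (hZa n) (hWa n)
  have hr_nonneg : ∀ n, 0 ≤ r n := fun n => Complex.abs.nonneg _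
  have hr_anti : Antitone r := by
    apply antitone_nat_of_succ_le
    intro n
    have := schwarz_pick hfd hfm (hZ n) (hW n)
    simpa only [hrdef, hZsucc n, hWsucc n] using this
  by_contra hcon
  set ρ : ℝ := ⨅ n, r n with hρdef
  have hbdd : BddBelow (Set.range r) := ⟨0, fun x ⟨n, hn⟩ => hn ▸ hr_nonneg n⟩
  have hrtends : Tendsto r atTop (𝓝 ρ) := tendsto_atTop_ciInf hr_anti hbdd
  have hρ_le : ∀ n, ρ ≤ r n := fun n => ciInf_le hbdd n
  have hρ0 : 0 ≤ ρ := le_ciInf hr_nonneg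
  have hρpos : 0 < ρ := by
    rcases lt_or_eq_of_le hρ0 with h | h
    · exact h
    · exfalso
      apply hcon
      have : Tendsto r atTop (𝓝 0) := by rwa [h]
      exact artanh_tendsto_zero hr_nonneg hr_lt this
  have hr_pos : ∀ n, 0 < r n := fun n => lt_of_lt_of_le hρpos (hρ_le n)
  -- constants
  set r₀ : ℝ := r 0 with hr₀def
  have hr₀1 : r₀ < 1 := hr_lt 0
  have hr₀0 : 0 < r₀ := hr_pos 0
  have hrle₀ : ∀ n, r n ≤ r₀ := fun n => hr_anti (Nat.zero_le n)
  set K : ℝ := (3 * r₀ + 1) / (3 + r₀) with hKdef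
  have hK1 : K < 1 := by
    rw [hKdef, div_lt_one (by linarith)]; linarith
  have hK0 : 0 ≤ K := by positivity
  set δ : ℝ := (1 - K) / (2 * (1 + K)) with hδdef
  have hδpos : 0 < δ := by
    apply div_pos (by linarith) (by linarith)
  -- choose n₁ for the step bound
  obtain ⟨n₁, hn₁⟩ := (Metric.tendsto_atTop.mp hs0) ((1 - r₀) / 4) (by linarith)
  have hsmall : ∀ n ≥ n₁, s n ≤ (1 - r₀) / 4 := by
    intro n hn
    have := hn₁ n hn
    rw [Real.dist_eq, sub_zero, _root_.abs_of_nonneg (hs_nonneg n)] at this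
    linarith
  -- choose n₂ for the epsilon bound
  have hεtends : Tendsto (fun n => 1 - ρ / r n) atTop (𝓝 0) := by
    have h1 : Tendsto (fun n => ρ / r n) atTop (𝓝 1) := by
      have := (tendsto_const_nhds (x := ρ) (f := atTop (α := ℕ))).div hrtends
        (ne_of_gt hρpos)
      rw [div_self (ne_of_gt hρpos)] at this; exact this
    have := (tendsto_const_nhds (x := (1:ℝ)) (f := atTop (α := ℕ))).sub h1
    simpa using this
  obtain ⟨n₂, hn₂⟩ := (Metric.tendsto_atTop.mp hεtends) δ hδpos
  set N₀ : ℕ := max n₁ n₂ with hN₀def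
  set ε : ℝ := 1 - ρ / r N₀ with hεdef
  have hε0 : 0 ≤ ε := by
    have h1 : ρ / r N₀ ≤ 1 := by
      rw [div_le_one (hr_pos N₀)]; exact hρ_le N₀
    simp only [hεdef]; linarith
  have hεδ : ε < δ := by
    have := hn₂ N₀ (le_max_right _ _)
    rw [Real.dist_eq, sub_zero] at this
    calc ε ≤ |1 - ρ / r N₀| := le_abs_self _
    _ < δ := this
  -- frame data
  set t : ℝ := s N₀ with htdef
  have ht_pos : 0 < t := hs_pos N₀
  have ht_small : t ≤ (1 - r₀) / 4 := hsmall N₀ (le_max_left _ _)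
  set m : ℕ → ℂ := fun n => mob (Z n) (W n) with hmdef
  have hrm : ∀ n, r n = Complex.abs (m n) := fun n => rfl
  have hm_ne : ∀ n, m n ≠ 0 := by
    intro n h
    have := hr_pos n
    rw [hrm n, h] at this
    simp at this
  set lam : ℕ → ℂ := fun n => (starRingEnd ℂ) (m n) / ((r n : ℝ) : ℂ) with hlamdef
  have hlam : ∀ n, Complex.abs (lam n) = 1 := by
    intro n
    simp only [hlamdef, map_div₀, Complex.abs_conj, Complex.abs_ofReal,
      _root_.abs_of_nonneg (hr_nonneg n)]
    rw [← hrm n, div_self (ne_of_gt (hr_pos n))]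
  have hrCne : ∀ n, ((r n : ℝ) : ℂ) ≠ 0 :=
    fun n => Complex.ofReal_ne_zero.mpr (ne_of_gt (hr_pos n))
  have hTw : ∀ n, Tmap (Z n) (lam n) (W n) = ((r n : ℝ) : ℂ) := by
    intro n
    rw [Tmap]
    simp only [hlamdef]
    rw [show mob (Z n) (W n) = m n from rfl]
    rw [div_mul_eq_mul_div, mul_comm ((starRingEnd ℂ) (m n)) (m n),
      Complex.mul_conj]
    rw [show Complex.normSq (m n) = (r n)^2 by rw [hrm n, Complex.sq_abs]]
    push_cast
    rw [pow_two, mul_div_assoc, div_self (hrCne n), mul_one]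
  have hTz : ∀ n, Tmap (Z n) (lam n) (Z n) = 0 := by
    intro n; rw [Tmap, mob_self, mul_zero]
  -- the claim : the step stays big
  have claim : ∀ N, N₀ < N → t / 2 ≤ s N := by
    intro N hNlt
    have hNle : N₀ ≤ N := le_of_lt hNlt
    set g : ℂ → ℂ :=
      (Tmap (Z N) (lam N)) ∘ (f^[N - N₀]) ∘ (Tinv (Z N₀) (lam N₀)) with hgdef
    have hTinvm := Tinv_mapsTo (hZa N₀) (hlam N₀)
    have hiterm : MapsTo (f^[N - N₀]) (ball (0:ℂ) 1) (ball (0:ℂ) 1) :=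
      hfm.iterate _
    have hgd : DifferentiableOn ℂ g (ball (0:ℂ) 1) := by
      apply ((Tmap_diffOn (hZa N)).comp
        (((iter_diffOn hfd hfm (N - N₀)).comp (Tinv_diffOn (hZa N₀) (hlam N₀))
          hTinvm)) (hiterm.comp hTinvm))
    have hgm : MapsTo g (ball (0:ℂ) 1) (ball (0:ℂ) 1) :=
      (Tmap_mapsTo (hZa N) (hlam N)).comp (hiterm.comp hTinvm)
    have hiterZ : f^[N - N₀] (Z N₀) = Z N := by
      show f^[N - N₀] (f^[N₀] z₀) = f^[N] z₀
      rw [← Function.iterate_add_apply, Nat.sub_add_cancel hNle]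
    have hiterW : f^[N - N₀] (W N₀) = W N := by
      show f^[N - N₀] (f^[N₀] w) = f^[N] w
      rw [← Function.iterate_add_apply, Nat.sub_add_cancel hNle]
    have hiterZ1 : f^[N - N₀] (Z (N₀ + 1)) = Z (N + 1) := by
      show f^[N - N₀] (f^[N₀ + 1] z₀) = f^[N + 1] z₀
      rw [← Function.iterate_add_apply]
      congr 1
      omega
    have hg0 : g 0 = 0 := by
      rw [hgdef]
      simp only [Function.comp_apply, Tinv_zero]
      rw [hiterZ, hTz]
    have hgr : g ((r N₀ : ℝ) : ℂ) = ((r N : ℝ) : ℂ) := by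
      rw [hgdef]
      simp only [Function.comp_apply]
      rw [← hTw N₀, Tinv_Tmap (hZa N₀) (hlam N₀) (hW N₀), hiterW, hTw]
    set q : ℂ := Tmap (Z N₀) (lam N₀) (Z (N₀ + 1)) with hqdef
    have habsq : Complex.abs q = t := by
      rw [hqdef, abs_Tmap (hlam N₀)]
    have hq_ball : q ∈ ball (0:ℂ) 1 := by
      rw [mem_ball_iff, habsq]; exact hs_lt N₀
    have hgq : g q = Tmap (Z N) (lam N) (Z (N + 1)) := by
      rw [hgdef]
      simp only [Function.comp_apply]
      rw [hqdef, Tinv_Tmap (hZa N₀) (hlam N₀) (hZ (N₀ + 1)), hiterZ1]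
    have habsgq : Complex.abs (g q) = s N := by
      rw [hgq, abs_Tmap (hlam N)]
    -- Schwarz quotient estimates
    set rc : ℂ := ((r N₀ : ℝ) : ℂ) with hrcdef
    have habs_rc : Complex.abs rc = r N₀ := by
      rw [hrcdef, Complex.abs_ofReal, _root_.abs_of_nonneg (hr_nonneg N₀)]
    have hrc_ball : rc ∈ ball (0:ℂ) 1 := by
      rw [mem_ball_iff, habs_rc]; exact hr_lt N₀
    have hrc_ne : rc ≠ 0 := hrCne N₀
    set v : ℝ := r N / r N₀ with hvdef
    have hφrc : dslope g 0 rc = ((v : ℝ) : ℂ) := by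
      rw [dslope_of_ne g hrc_ne, slope_def_field, hg0, hgr, sub_zero,
        sub_zero, hrcdef, hvdef]
      push_cast
      ring
    have hv0 : 0 < v := div_pos (hr_pos N) (hr_pos N₀)
    have hv1 : v ≤ 1 := by
      rw [hvdef, div_le_one (hr_pos N₀)]
      exact hr_anti hNle
    have hvε : 1 - v ≤ ε := by
      have h1 : ρ / r N₀ ≤ v := by
        rw [hvdef]
        exact (div_le_div_iff_of_pos_right (hr_pos N₀)).mpr (hρ_le N)
      simp only [hεdef]
      linarith
    have hsp := dslope_sp hgd hgm hg0 hrc_ball hq_ball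
    rw [hφrc] at hsp
    have hconjv : (starRingEnd ℂ) ((v:ℝ):ℂ) = ((v:ℝ):ℂ) := Complex.conj_ofReal v
    rw [hconjv] at hsp
    set u : ℂ := dslope g 0 q with hudef
    have hu_le : Complex.abs u ≤ 1 := abs_dslope_le_one hgd hgm hg0 hq_ball
    set A : ℝ := Complex.abs (u - ((v:ℝ):ℂ)) with hAdef
    set k : ℝ := Complex.abs (mob rc q) with hkdef
    have hA0 : 0 ≤ A := Complex.abs.nonneg _
    have hk0 : 0 ≤ k := Complex.abs.nonneg _
    clear_value u A k v ε K δ t r₀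
    -- bound k ≤ K
    have hknum : Complex.abs (q - rc) ≤ (3 * r₀ + 1) / 4 := by
      have h1 : Complex.abs (q - rc) ≤ Complex.abs q + Complex.abs rc := by
        simpa [Complex.norm_eq_abs] using norm_sub_le q rc
      rw [habsq, habs_rc] at h1
      have h2 : r N₀ ≤ r₀ := hrle₀ N₀
      linarith [ht_small]
    have hkden : (3 + r₀) / 4 ≤ Complex.abs (1 - (starRingEnd ℂ) rc * q) := by
      have h1 : (starRingEnd ℂ) rc = rc := by rw [hrcdef]; exact Complex.conj_ofReal _
      rw [h1]
      have h2 := one_sub_abs_le (rc * q)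
      have h3 : Complex.abs (rc * q) = r N₀ * t := by rw [map_mul, habs_rc, habsq]
      rw [h3] at h2
      have h4 : r N₀ * t ≤ t := by nlinarith [hr_lt N₀, ht_pos.le, hr_nonneg N₀]
      linarith [ht_small]
    have hk : k ≤ K := by
      have h9 : (3 * r₀ + 1) / 4 / ((3 + r₀) / 4) = K := by
        rw [hKdef]
        have h30 : (3:ℝ) + r₀ ≠ 0 := by linarith
        field_simp
      rw [hkdef, mob, map_div₀]
      calc Complex.abs (q - rc) / Complex.abs (1 - (starRingEnd ℂ) rc * q)
          ≤ (3 * r₀ + 1) / 4 / ((3 + r₀) / 4) := by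
            apply div_le_div₀ (by positivity) hknum (by positivity) hkden
      _ = K := h9
    -- bound |1 - v u|
    have hvu : Complex.abs (((v:ℝ):ℂ) - u) = A := by
      rw [hAdef]; exact Complex.abs.map_sub _ _
    have habs1 : Complex.abs (1 - ((v:ℝ):ℂ) * u) ≤ 2 * (1 - v) + A := by
      have e : (1:ℂ) - ((v:ℝ):ℂ) * u
          = (((1 - v^2 : ℝ)):ℂ) + ((v:ℝ):ℂ) * (((v:ℝ):ℂ) - u) := by
        push_cast; ring
      calc Complex.abs (1 - ((v:ℝ):ℂ) * u)
          ≤ Complex.abs (((1 - v^2 : ℝ)):ℂ)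
            + Complex.abs (((v:ℝ):ℂ) * (((v:ℝ):ℂ) - u)) := by
            rw [e]; exact Complex.abs.add_le _ _
      _ = (1 - v^2) + v * A := by
            rw [map_mul, Complex.abs_ofReal, Complex.abs_ofReal, hvu,
              _root_.abs_of_nonneg (by nlinarith : (0:ℝ) ≤ 1 - v^2),
              _root_.abs_of_nonneg hv0.le]
      _ ≤ 2 * (1 - v) + A := by nlinarith
    -- combine
    have hA1 : A ≤ K * (2 * ε + A) := by
      calc A ≤ k * Complex.abs (1 - ((v:ℝ):ℂ) * u) := hsp
      _ ≤ K * (2 * (1 - v) + A) :=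
          mul_le_mul hk habs1 (Complex.abs.nonneg _) hK0
      _ ≤ K * (2 * ε + A) := by
          apply mul_le_mul_of_nonneg_left (by linarith) hK0
    have hδval : δ * (2 * (1 + K)) = 1 - K := by
      rw [hδdef]; field_simp
    have h2' : A * (1 - K) ≤ 2 * K * ε := by nlinarith [hA1]
    have h3' : ε * (2 * (1 + K)) < 1 - K := by
      have hfac : (0:ℝ) < 2 * (1 + K) := by linarith
      calc ε * (2 * (1 + K)) < δ * (2 * (1 + K)) :=
            mul_lt_mul_of_pos_right hεδ hfac
      _ = 1 - K := hδval
    have hK1' : (0:ℝ) < 1 - K := by linarith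
    have hs1 : (A + ε) * (1 - K) < (1 - K) / 2 := by
      calc (A + ε) * (1 - K) = A * (1 - K) + ε * (1 - K) := by ring
      _ ≤ 2 * K * ε + ε * (1 - K) := by linarith [h2']
      _ = ε * (2 * (1 + K)) / 2 := by ring
      _ < (1 - K) / 2 := by linarith [h3']
    have hAε : A + ε < 1 / 2 := by nlinarith [hs1, hK1']
    -- |u| is at least 1/2
    have hu_ge : 1 / 2 ≤ Complex.abs u := by
      have h5 := Complex.abs.add_le u (((v:ℝ):ℂ) - u)
      have h6 : u + (((v:ℝ):ℂ) - u) = ((v:ℝ):ℂ) := by ring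
      rw [h6, Complex.abs_ofReal, _root_.abs_of_nonneg hv0.le, hvu] at h5
      linarith
    -- conclude
    have hgq_eq : g q = q * dslope g 0 q := by
      have h7 := sub_smul_dslope g 0 q
      rw [sub_zero, hg0, sub_zero, smul_eq_mul] at h7
      exact h7.symm
    have h8 : s N = t * Complex.abs u := by
      rw [← habsgq, hgq_eq, map_mul, habsq, hudef]
    rw [h8]
    nlinarith
  -- final contradiction
  obtain ⟨N₁, hN₁⟩ := (Metric.tendsto_atTop.mp hs0) (t / 2) (by linarith)
  have h1 := hN₁ (max (N₀ + 1) N₁) (le_max_right _ _)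
  have h2 := claim (max (N₀ + 1) N₁)
    (lt_of_lt_of_le (Nat.lt_succ_self N₀) (le_max_left _ _))
  rw [Real.dist_eq, sub_zero, _root_.abs_of_nonneg (hs_nonneg _)] at h1
  linarith

end Stmt10Aux

open Stmt10Aux in
theorem stmt10 (f : ℂ → ℂ) (hf : HolSelfDisk f)
    (hfix : ∀ z ∈ ball (0:ℂ) 1, f z ≠ z)
    (z₀ : ℂ) (hz₀ : z₀ ∈ ball (0:ℂ) 1)
    (hstep : Tendsto (fun n => pd (f^[n] z₀) (f^[n+1] z₀)) atTop (nhds 0)) :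
    ∀ z ∈ ball (0:ℂ) 1, ∀ w ∈ ball (0:ℂ) 1,
      Tendsto (fun n => pd (f^[n] z) (f^[n] w)) atTop (nhds 0) := by
  intro z hz w hw
  have hfm := hf.2
  have h1 := key_sync hf hfix hz₀ hstep hz
  have h2 := key_sync hf hfix hz₀ hstep hw
  have hsum : Tendsto
      (fun n => pd (f^[n] z₀) (f^[n] z) + pd (f^[n] z₀) (f^[n] w)) atTop (nhds 0) := by
    have := h1.add h2
    simpa using this
  apply squeeze_zero (fun n => pd_nonneg (hfm.iterate n hz) (hfm.iterate n hw))
    (fun n => ?_) hsum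
  calc pd (f^[n] z) (f^[n] w)
      ≤ pd (f^[n] z) (f^[n] z₀) + pd (f^[n] z₀) (f^[n] w) :=
        pd_triangle (hfm.iterate n hz) (hfm.iterate n hw) (hfm.iterate n hz₀)
  _ = pd (f^[n] z₀) (f^[n] z) + pd (f^[n] z₀) (f^[n] w) := by rw [pd_symm]
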